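/- If K ⊆ X × 𝕊¹ is closed and rotation-coherent, and the fiber K_y is infinite for some y ∈ X, then K_y = 𝕊¹, i.e. the whole circle fiber {y} × 𝕊¹ is contained in K. (This is the first claim in the proof of the Proposition on skew products: a minimal set of the strong unstable foliation of an isometric circle extension cannot meet any circle fiber in an infinite proper subset.) -/

import Mathlib

private lemma stmt6_torsion_finite (n : ℕ) (hn : 0 < n) :
    {u : AddCircle (1 : ℝ) | n • u = 0}.Finite := by
  haveI : Fact ((0:ℝ) < 1) := ⟨zero_lt_one⟩
  have hsub : {u : AddCircle (1 : ℝ) | n • u = 0} ⊆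
      ⋃ d ∈ n.divisors, {u : AddCircle (1 : ℝ) | addOrderOf u = d} := by
    intro u hu
    have hdvd : addOrderOf u ∣ n := addOrderOf_dvd_of_nsmul_eq_zero hu
    have hfin : IsOfFinAddOrder u := by
      refine isOfFinAddOrder_iff_nsmul_eq_zero.2 ⟨n, hn, hu⟩
    refine Set.mem_biUnion ?_ rfl
    exact Nat.mem_divisors.2 ⟨hdvd, hn.ne'⟩
  refine Set.Finite.subset ?_ hsub
  refine Set.Finite.biUnion (n.divisors.finite_toSet) (fun d hd => ?_)
  exact AddCircle.finite_setOfPred_addOrderOf_eq (p := (1:ℝ)) (Nat.pos_of_mem_divisors hd)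

private lemma stmt6_subgroup_top (T : AddSubgroup (AddCircle (1 : ℝ)))
    (hcl : IsClosed (T : Set (AddCircle (1 : ℝ))))
    (hinf : (T : Set (AddCircle (1 : ℝ))).Infinite) : T = ⊤ := by
  set π : ℝ →+ AddCircle (1 : ℝ) := QuotientAddGroup.mk' (AddSubgroup.zmultiples (1:ℝ))
  have hπsurj : Function.Surjective π := QuotientAddGroup.mk'_surjective _
  have hπcont : Continuous π := continuous_quotient_mk'
  set T' : AddSubgroup ℝ := T.comap π
  have hT'cl : IsClosed (T' : Set ℝ) := hcl.preimage hπcont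
  rcases T'.dense_or_cyclic with hdense | ⟨a, ha⟩
  · have huniv : (T' : Set ℝ) = Set.univ := by
      have h := hdense.closure_eq
      rwa [hT'cl.closure_eq] at h
    have hT'top : T' = ⊤ := SetLike.coe_injective (by rw [huniv, AddSubgroup.coe_top])
    have := AddSubgroup.comap_injective (f := π) hπsurj
    rw [← AddSubgroup.comap_top π] at hT'top
    exact this hT'top
  · exfalso
    rw [← AddSubgroup.zmultiples_eq_closure] at ha
    have h1 : (1:ℝ) ∈ T' := by
      show π (1:ℝ) ∈ T
      have hπ1 : π (1:ℝ) = 0 := by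
        rw [QuotientAddGroup.mk'_apply, QuotientAddGroup.eq_zero_iff]
        exact AddSubgroup.mem_zmultiples 1
      rw [hπ1]; exact T.zero_mem
    rw [ha] at h1
    obtain ⟨n, hn⟩ := h1
    have hn' : n • a = (1:ℝ) := hn
    have hn0 : n ≠ 0 := by
      rintro rfl
      simp at hn'
    have hkeyZ : ∀ u ∈ T, n • u = 0 := by
      intro u hu
      obtain ⟨x, rfl⟩ := hπsurj u
      have hx : x ∈ T' := hu
      rw [ha] at hx
      obtain ⟨m, hm⟩ := hx
      have hm' : m • a = x := hm
      have h3 : n • x = m • (1:ℝ) := by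
        rw [← hm', smul_comm, hn']
      have h4 : π (n • x) = 0 := by
        rw [h3, QuotientAddGroup.mk'_apply, QuotientAddGroup.eq_zero_iff]
        exact AddSubgroup.zsmul_mem _ (AddSubgroup.mem_zmultiples 1) m
      rw [← map_zsmul π, h4]
    have hkey : ∀ u ∈ T, n.natAbs • u = 0 := by
      intro u hu
      have h0 : (n.natAbs : ℤ) • u = 0 ∨ (n.natAbs : ℤ) • u = -(n • u) := by
        rcases Int.natAbs_eq n with he | he
        · left; rw [← he, hkeyZ u hu]
        · right
          have : (n.natAbs : ℤ) = -n := by omega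
          rw [this, neg_smul]
      rcases h0 with h0 | h0 <;>
        simp [← natCast_zsmul, h0, hkeyZ u hu] at h0 ⊢ <;>
        simp [h0]
    have hfin : (T : Set (AddCircle (1:ℝ))).Finite := by
      refine Set.Finite.subset (stmt6_torsion_finite n.natAbs (Int.natAbs_pos.2 hn0)) ?_
      intro u hu; exact hkey u hu
    exact hinf hfin

/-- Let `𝕊¹ = ℝ/ℤ` and `X` a topological space. If `K ⊆ X × 𝕊¹` is closed
and rotation-coherent (for every `α`, if the fiber rotation `G_α` satisfies
`G_α(K) ∩ K ≠ ∅` then `G_α(K) = K`), and the fiber `K_y` is infinite for some `y ∈ X`,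
then `K_y = 𝕊¹`, i.e. the whole circle fiber `{y} × 𝕊¹` is contained in `K`. -/
theorem stmt6_infinite_fiber_is_whole_circle
    {X : Type*} [TopologicalSpace X]
    (K : Set (X × AddCircle (1 : ℝ)))
    (hK_cl : IsClosed K)
    (hK_rot : ∀ α : AddCircle (1 : ℝ),
      ((fun p : X × AddCircle (1 : ℝ) => (p.1, p.2 + α)) '' K ∩ K).Nonempty →
      (fun p : X × AddCircle (1 : ℝ) => (p.1, p.2 + α)) '' K = K)
    (y : X)
    (h_inf : {θ : AddCircle (1 : ℝ) | (y, θ) ∈ K}.Infinite) :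
    {θ : AddCircle (1 : ℝ) | (y, θ) ∈ K} = Set.univ := by
  set S : Set (AddCircle (1:ℝ)) := {θ : AddCircle (1 : ℝ) | (y, θ) ∈ K} with hS
  have hS_cl : IsClosed S := hK_cl.preimage (Continuous.prodMk_right y)
  obtain ⟨θ₀, hθ₀⟩ := h_inf.nonempty
  -- rotations preserving K form a subgroup
  set Gmap : AddCircle (1:ℝ) → X × AddCircle (1:ℝ) → X × AddCircle (1:ℝ) :=
    fun α p => (p.1, p.2 + α) with hGmap
  have hcomp : ∀ α β p, Gmap α (Gmap β p) = Gmap (β + α) p := by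
    intro α β p; simp [Gmap, add_assoc]
  set T : AddSubgroup (AddCircle (1:ℝ)) :=
    { carrier := {α | Gmap α '' K = K}
      zero_mem' := by
        have : Gmap 0 = id := by funext p; simp [Gmap]
        simp [this]
      add_mem' := by
        intro α β hα hβ
        show Gmap (α + β) '' K = K
        have : Gmap (α + β) '' K = Gmap β '' (Gmap α '' K) := by
          rw [← Set.image_comp]
          congr 1
          funext p
          simp [hcomp]
        rw [this, hα, hβ]
      neg_mem' := by
        intro α hα
        show Gmap (-α) '' K = K
        have hid : (Gmap (-α)) ∘ (Gmap α) = id := by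
          funext p; simp [Gmap]
        calc Gmap (-α) '' K = Gmap (-α) '' (Gmap α '' K) := by rw [hα]
          _ = (Gmap (-α) ∘ Gmap α) '' K := (Set.image_comp _ _ _).symm
          _ = K := by rw [hid, Set.image_id] } with hT
  -- differences of fiber elements lie in T
  have hdiff : ∀ θ ∈ S, ∀ θ' ∈ S, θ' - θ ∈ T := by
    intro θ hθ θ' hθ'
    show Gmap (θ' - θ) '' K = K
    apply hK_rot
    refine ⟨(y, θ'), ⟨(y, θ), hθ, ?_⟩, hθ'⟩
    simp
  -- membership transfer
  have htrans : ∀ α ∈ T, ∀ σ ∈ S, σ + α ∈ S := by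
    intro α hα σ hσ
    have himg : Gmap α '' K = K := hα
    have : Gmap α (y, σ) ∈ K := by
      rw [← himg]; exact ⟨(y, σ), hσ, rfl⟩
    exact this
  -- T's carrier equals S - θ₀
  have hcar : (T : Set (AddCircle (1:ℝ))) = (fun θ => θ - θ₀) '' S := by
    ext α
    constructor
    · intro hα
      exact ⟨θ₀ + α, htrans α hα θ₀ hθ₀, by simp⟩
    · rintro ⟨θ, hθ, rfl⟩
      exact hdiff θ₀ hθ₀ θ hθ
  have hTcl : IsClosed (T : Set (AddCircle (1:ℝ))) := by
    rw [hcar]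
    have : (fun θ : AddCircle (1:ℝ) => θ - θ₀) '' S = (fun θ => θ + θ₀) ⁻¹' S := by
      ext α
      constructor
      · rintro ⟨θ, hθ, rfl⟩; simpa using hθ
      · intro h; exact ⟨α + θ₀, h, by simp⟩
    rw [this]
    exact hS_cl.preimage (by continuity)
  have hTinf : (T : Set (AddCircle (1:ℝ))).Infinite := by
    rw [hcar]
    exact h_inf.image (fun x _ x' _ h => by simpa using congrArg (· + θ₀) h)
  have hTtop : T = ⊤ := stmt6_subgroup_top T hTcl hTinf
  ext θ
  simp only [Set.mem_univ, iff_true]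
  have hmem : θ - θ₀ ∈ T := hTtop ▸ AddSubgroup.mem_top _
  have := htrans (θ - θ₀) hmem θ₀ hθ₀
  simpa using this
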